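/- arXiv:1408.0324 — 4 statements merged into one kernel-verified Lean document; each statement's English description precedes it below -/
import Mathlib

section
/- Let (Ω, F, μ) be a probability space and let U, W, ε_M, ε_T, ε_Y be square-integrable real random variables, each with mean 0 and variance 1, such that Cov(U, W) = ρ and all other pairs among {U, W, ε_M, ε_T, ε_Y} have covariance 0. Let a, b, c, d, ρ be real numbers with a² ≤ 1, d² ≤ 1, and b² + c² + 2bcρ ≤ 1 (so that M below has variance 1). Define M := b·U + c·W + √(1−b²−c²−2bcρ)·ε_M, T := a·U + √(1−a²)·ε_T, and Y := d·W + √(1−d²)·ε_Y. If 1 − (ab + acρ)² ≠ 0, then the adjusted regression coefficient of T satisfies β_T = (adρ·(1−b²−c²−bcρ) − abcd) / (1 − (ab + acρ)²). -/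
open MeasureTheory ProbabilityTheory

/-- Covariance of two real random variables: `Cov(X,Y) = E[XY] - E[X] E[Y]`. -/
noncomputable def covar {Ω : Type*} [MeasurableSpace Ω] (μ : Measure Ω) (X Y : Ω → ℝ) : ℝ :=
  (∫ ω, X ω * Y ω ∂μ) - (∫ ω, X ω ∂μ) * (∫ ω, Y ω ∂μ)

/-- The population OLS coefficient on `T` when regressing `Y` on `(T, M)`. -/
noncomputable def betaT {Ω : Type*} [MeasurableSpace Ω] (μ : Measure Ω) (Y T M : Ω → ℝ) : ℝ :=
  (covar μ Y T * variance M μ - covar μ Y M * covar μ M T) /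
    (variance T μ * variance M μ - (covar μ M T) ^ 2)


section Aux
variable {Ω : Type*} [MeasurableSpace Ω] {μ : Measure Ω}

lemma intMul {f g : Ω → ℝ} (hf : MemLp f 2 μ) (hg : MemLp g 2 μ) :
    Integrable (fun ω => f ω * g ω) μ := by
  have h := hg.smul (r := 1) hf (hpqr := ⟨by simp [one_div, ENNReal.inv_two_add_inv_two]⟩)
  rw [memLp_one_iff_integrable] at h
  simpa [smul_eq_mul, Pi.mul_def] using h

lemma ipComm (f g : Ω → ℝ) : ∫ ω, f ω * g ω ∂μ = ∫ ω, g ω * f ω ∂μ := by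
  simp_rw [mul_comm]

lemma ip2L {f1 f2 g : Ω → ℝ} (hf1 : MemLp f1 2 μ) (hf2 : MemLp f2 2 μ)
    (hg : MemLp g 2 μ) (c1 c2 : ℝ) :
    ∫ ω, (c1 * f1 ω + c2 * f2 ω) * g ω ∂μ
      = c1 * ∫ ω, f1 ω * g ω ∂μ + c2 * ∫ ω, f2 ω * g ω ∂μ := by
  have h1 := intMul hf1 hg
  have h2 := intMul hf2 hg
  have key : ∀ ω, (c1 * f1 ω + c2 * f2 ω) * g ω
      = c1 * (f1 ω * g ω) + c2 * (f2 ω * g ω) := fun ω => by ring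
  simp_rw [key]
  rw [integral_add (h1.const_mul c1) (h2.const_mul c2), integral_const_mul, integral_const_mul]

lemma ip2R {f1 f2 g : Ω → ℝ} (hf1 : MemLp f1 2 μ) (hf2 : MemLp f2 2 μ)
    (hg : MemLp g 2 μ) (c1 c2 : ℝ) :
    ∫ ω, g ω * (c1 * f1 ω + c2 * f2 ω) ∂μ
      = c1 * ∫ ω, g ω * f1 ω ∂μ + c2 * ∫ ω, g ω * f2 ω ∂μ := by
  rw [ipComm, ip2L hf1 hf2 hg, ipComm f1 g, ipComm f2 g]

lemma ip3L {f1 f2 f3 g : Ω → ℝ} (hf1 : MemLp f1 2 μ) (hf2 : MemLp f2 2 μ)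
    (hf3 : MemLp f3 2 μ) (hg : MemLp g 2 μ) (c1 c2 c3 : ℝ) :
    ∫ ω, (c1 * f1 ω + c2 * f2 ω + c3 * f3 ω) * g ω ∂μ
      = c1 * ∫ ω, f1 ω * g ω ∂μ + c2 * ∫ ω, f2 ω * g ω ∂μ + c3 * ∫ ω, f3 ω * g ω ∂μ := by
  have h1 := intMul hf1 hg
  have h2 := intMul hf2 hg
  have h3 := intMul hf3 hg
  have key : ∀ ω, (c1 * f1 ω + c2 * f2 ω + c3 * f3 ω) * g ω
      = c1 * (f1 ω * g ω) + c2 * (f2 ω * g ω) + c3 * (f3 ω * g ω) := fun ω => by ring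
  simp_rw [key]
  have h12 : Integrable (fun ω => c1 * (f1 ω * g ω) + c2 * (f2 ω * g ω)) μ :=
    (h1.const_mul c1).add (h2.const_mul c2)
  rw [integral_add h12 (h3.const_mul c3), integral_add (h1.const_mul c1) (h2.const_mul c2),
    integral_const_mul, integral_const_mul, integral_const_mul]

lemma ip3R {f1 f2 f3 g : Ω → ℝ} (hf1 : MemLp f1 2 μ) (hf2 : MemLp f2 2 μ)
    (hf3 : MemLp f3 2 μ) (hg : MemLp g 2 μ) (c1 c2 c3 : ℝ) :
    ∫ ω, g ω * (c1 * f1 ω + c2 * f2 ω + c3 * f3 ω) ∂μ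
      = c1 * ∫ ω, g ω * f1 ω ∂μ + c2 * ∫ ω, g ω * f2 ω ∂μ + c3 * ∫ ω, g ω * f3 ω ∂μ := by
  rw [ipComm, ip3L hf1 hf2 hf3 hg, ipComm f1 g, ipComm f2 g, ipComm f3 g]

lemma mean2L {f1 f2 : Ω → ℝ} (hf1 : Integrable f1 μ) (hf2 : Integrable f2 μ) (c1 c2 : ℝ) :
    ∫ ω, (c1 * f1 ω + c2 * f2 ω) ∂μ = c1 * ∫ ω, f1 ω ∂μ + c2 * ∫ ω, f2 ω ∂μ := by
  rw [integral_add (hf1.const_mul c1) (hf2.const_mul c2), integral_const_mul, integral_const_mul]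

lemma mean3L {f1 f2 f3 : Ω → ℝ} (hf1 : Integrable f1 μ) (hf2 : Integrable f2 μ)
    (hf3 : Integrable f3 μ) (c1 c2 c3 : ℝ) :
    ∫ ω, (c1 * f1 ω + c2 * f2 ω + c3 * f3 ω) ∂μ
      = c1 * ∫ ω, f1 ω ∂μ + c2 * ∫ ω, f2 ω ∂μ + c3 * ∫ ω, f3 ω ∂μ := by
  have h12 : Integrable (fun ω => c1 * f1 ω + c2 * f2 ω) μ :=
    (hf1.const_mul c1).add (hf2.const_mul c2)
  rw [integral_add h12 (hf3.const_mul c3), integral_add (hf1.const_mul c1) (hf2.const_mul c2),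
    integral_const_mul, integral_const_mul, integral_const_mul]
lemma covar_of_meanzero {f g : Ω → ℝ}
    (hf : ∫ ω, f ω ∂μ = 0) : covar μ f g = ∫ ω, f ω * g ω ∂μ := by
  simp [covar, hf]

lemma sqmul (X : Ω → ℝ) : (∫ ω, X ω * X ω ∂μ) = ∫ ω, (X ^ 2) ω ∂μ := by
  congr 1; ext ω; simp [sq]

end Aux

/-- Bias of the adjusted estimator in the M-structure with correlated latent causes. -/
theorem stmt2 {Ω : Type*} [MeasurableSpace Ω] (μ : Measure Ω) [IsProbabilityMeasure μ]
    (U W εM εT εY : Ω → ℝ)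
    (hU2 : MemLp U 2 μ) (hW2 : MemLp W 2 μ) (hεM2 : MemLp εM 2 μ)
    (hεT2 : MemLp εT 2 μ) (hεY2 : MemLp εY 2 μ)
    (hUm : ∫ ω, U ω ∂μ = 0) (hWm : ∫ ω, W ω ∂μ = 0) (hεMm : ∫ ω, εM ω ∂μ = 0)
    (hεTm : ∫ ω, εT ω ∂μ = 0) (hεYm : ∫ ω, εY ω ∂μ = 0)
    (hUv : variance U μ = 1) (hWv : variance W μ = 1) (hεMv : variance εM μ = 1)
    (hεTv : variance εT μ = 1) (hεYv : variance εY μ = 1)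
    (a b c d ρ : ℝ)
    (hUW : covar μ U W = ρ)
    (hUεM : covar μ U εM = 0) (hUεT : covar μ U εT = 0) (hUεY : covar μ U εY = 0)
    (hWεM : covar μ W εM = 0) (hWεT : covar μ W εT = 0) (hWεY : covar μ W εY = 0)
    (hεMεT : covar μ εM εT = 0) (hεMεY : covar μ εM εY = 0) (hεTεY : covar μ εT εY = 0)
    (ha : a ^ 2 ≤ 1) (hd : d ^ 2 ≤ 1) (hbc : b ^ 2 + c ^ 2 + 2 * b * c * ρ ≤ 1)
    (M T Y : Ω → ℝ)
    (hM : M = fun ω => b * U ω + c * W ω + Real.sqrt (1 - b ^ 2 - c ^ 2 - 2 * b * c * ρ) * εM ω)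
    (hT : T = fun ω => a * U ω + Real.sqrt (1 - a ^ 2) * εT ω)
    (hY : Y = fun ω => d * W ω + Real.sqrt (1 - d ^ 2) * εY ω)
    (hne : 1 - (a * b + a * c * ρ) ^ 2 ≠ 0) :
    betaT μ Y T M =
      (a * d * ρ * (1 - b ^ 2 - c ^ 2 - b * c * ρ) - a * b * c * d) /
        (1 - (a * b + a * c * ρ) ^ 2) := by
  set sM := Real.sqrt (1 - b ^ 2 - c ^ 2 - 2 * b * c * ρ) with hsMdef
  set sT := Real.sqrt (1 - a ^ 2) with hsTdef
  set sY := Real.sqrt (1 - d ^ 2) with hsYdef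
  have hsM : sM * sM = 1 - b ^ 2 - c ^ 2 - 2 * b * c * ρ :=
    Real.mul_self_sqrt (by linarith)
  have hsT : sT * sT = 1 - a ^ 2 := Real.mul_self_sqrt (by linarith)
  have hsY : sY * sY = 1 - d ^ 2 := Real.mul_self_sqrt (by linarith)
  have hM2 : MemLp M 2 μ := by
    rw [hM]
    exact ((hU2.const_mul b).add (hW2.const_mul c)).add (hεM2.const_mul sM)
  have hT2 : MemLp T 2 μ := by
    rw [hT]; exact (hU2.const_mul a).add (hεT2.const_mul sT)
  have hY2 : MemLp Y 2 μ := by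
    rw [hY]; exact (hW2.const_mul d).add (hεY2.const_mul sY)
  -- means
  have hUi := hU2.integrable one_le_two
  have hWi := hW2.integrable one_le_two
  have hεMi := hεM2.integrable one_le_two
  have hεTi := hεT2.integrable one_le_two
  have hεYi := hεY2.integrable one_le_two
  have mT : ∫ ω, T ω ∂μ = 0 := by
    rw [hT, mean2L hUi hεTi, hUm, hεTm]; ring
  have mM : ∫ ω, M ω ∂μ = 0 := by
    rw [hM, mean3L hUi hWi hεMi, hUm, hWm, hεMm]; ring
  have mY : ∫ ω, Y ω ∂μ = 0 := by
    rw [hY, mean2L hWi hεYi, hWm, hεYm]; ring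
  -- base second moments
  have eUU : ∫ ω, U ω * U ω ∂μ = 1 := by
    rw [sqmul U]; have h := variance_eq_sub hU2; rw [hUv, hUm] at h; linarith
  have eWW : ∫ ω, W ω * W ω ∂μ = 1 := by
    rw [sqmul W]; have h := variance_eq_sub hW2; rw [hWv, hWm] at h; linarith
  have eMM' : ∫ ω, εM ω * εM ω ∂μ = 1 := by
    rw [sqmul εM]; have h := variance_eq_sub hεM2; rw [hεMv, hεMm] at h; linarith
  have eTT' : ∫ ω, εT ω * εT ω ∂μ = 1 := by
    rw [sqmul εT]; have h := variance_eq_sub hεT2; rw [hεTv, hεTm] at h; linarith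
  have eYY' : ∫ ω, εY ω * εY ω ∂μ = 1 := by
    rw [sqmul εY]; have h := variance_eq_sub hεY2; rw [hεYv, hεYm] at h; linarith
  have eUW : ∫ ω, U ω * W ω ∂μ = ρ := (covar_of_meanzero hUm).symm.trans hUW
  have eUεM : ∫ ω, U ω * εM ω ∂μ = 0 := (covar_of_meanzero hUm).symm.trans hUεM
  have eUεT : ∫ ω, U ω * εT ω ∂μ = 0 := (covar_of_meanzero hUm).symm.trans hUεT
  have eUεY : ∫ ω, U ω * εY ω ∂μ = 0 := (covar_of_meanzero hUm).symm.trans hUεY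
  have eWεM : ∫ ω, W ω * εM ω ∂μ = 0 := (covar_of_meanzero hWm).symm.trans hWεM
  have eWεT : ∫ ω, W ω * εT ω ∂μ = 0 := (covar_of_meanzero hWm).symm.trans hWεT
  have eWεY : ∫ ω, W ω * εY ω ∂μ = 0 := (covar_of_meanzero hWm).symm.trans hWεY
  have eεMεT : ∫ ω, εM ω * εT ω ∂μ = 0 := (covar_of_meanzero hεMm).symm.trans hεMεT
  have eεMεY : ∫ ω, εM ω * εY ω ∂μ = 0 := (covar_of_meanzero hεMm).symm.trans hεMεY
  have eεTεY : ∫ ω, εT ω * εY ω ∂μ = 0 := (covar_of_meanzero hεTm).symm.trans hεTεY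
  have eWU : ∫ ω, W ω * U ω ∂μ = ρ := (ipComm W U).trans eUW
  have eεTU : ∫ ω, εT ω * U ω ∂μ = 0 := (ipComm εT U).trans eUεT
  have eεMU : ∫ ω, εM ω * U ω ∂μ = 0 := (ipComm εM U).trans eUεM
  have eεYU : ∫ ω, εY ω * U ω ∂μ = 0 := (ipComm εY U).trans eUεY
  have eεTW : ∫ ω, εT ω * W ω ∂μ = 0 := (ipComm εT W).trans eWεT
  have eεMW : ∫ ω, εM ω * W ω ∂μ = 0 := (ipComm εM W).trans eWεM
  have eεYW : ∫ ω, εY ω * W ω ∂μ = 0 := (ipComm εY W).trans eWεY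
  have eεTεM : ∫ ω, εT ω * εM ω ∂μ = 0 := (ipComm εT εM).trans eεMεT
  have eεYεM : ∫ ω, εY ω * εM ω ∂μ = 0 := (ipComm εY εM).trans eεMεY
  have eεYεT : ∫ ω, εY ω * εT ω ∂μ = 0 := (ipComm εY εT).trans eεTεY
  -- expansions
  have expT : ∀ g : Ω → ℝ, MemLp g 2 μ → ∫ ω, T ω * g ω ∂μ
      = a * ∫ ω, U ω * g ω ∂μ + sT * ∫ ω, εT ω * g ω ∂μ := by
    intro g hg; simp only [hT]; exact ip2L hU2 hεT2 hg a sT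
  have expY : ∀ g : Ω → ℝ, MemLp g 2 μ → ∫ ω, Y ω * g ω ∂μ
      = d * ∫ ω, W ω * g ω ∂μ + sY * ∫ ω, εY ω * g ω ∂μ := by
    intro g hg; simp only [hY]; exact ip2L hW2 hεY2 hg d sY
  have expM : ∀ g : Ω → ℝ, MemLp g 2 μ → ∫ ω, M ω * g ω ∂μ
      = b * ∫ ω, U ω * g ω ∂μ + c * ∫ ω, W ω * g ω ∂μ + sM * ∫ ω, εM ω * g ω ∂μ := by
    intro g hg; simp only [hM]; exact ip3L hU2 hW2 hεM2 hg b c sM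
  -- second moments with T
  have eUT : ∫ ω, U ω * T ω ∂μ = a := by
    rw [ipComm U T, expT U hU2, eUU, eεTU]; ring
  have eWT : ∫ ω, W ω * T ω ∂μ = a * ρ := by
    rw [ipComm W T, expT W hW2, eUW, eεTW]; ring
  have eεMT : ∫ ω, εM ω * T ω ∂μ = 0 := by
    rw [ipComm εM T, expT εM hεM2, eUεM, eεTεM]; ring
  have eεYT : ∫ ω, εY ω * T ω ∂μ = 0 := by
    rw [ipComm εY T, expT εY hεY2, eUεY, eεTεY]; ring
  have eεTT : ∫ ω, εT ω * T ω ∂μ = sT := by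
    rw [ipComm εT T, expT εT hεT2, eUεT, eTT']; ring
  have eTT : ∫ ω, T ω * T ω ∂μ = 1 := by
    rw [expT T hT2, eUT, eεTT, hsT]; ring
  -- second moments with M
  have eUM : ∫ ω, U ω * M ω ∂μ = b + c * ρ := by
    rw [ipComm U M, expM U hU2, eUU, eWU, eεMU]; ring
  have eWM : ∫ ω, W ω * M ω ∂μ = b * ρ + c := by
    rw [ipComm W M, expM W hW2, eUW, eWW, eεMW]; ring
  have eεMM : ∫ ω, εM ω * M ω ∂μ = sM := by
    rw [ipComm εM M, expM εM hεM2, eUεM, eWεM, eMM']; ring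
  have eεYM : ∫ ω, εY ω * M ω ∂μ = 0 := by
    rw [ipComm εY M, expM εY hεY2, eUεY, eWεY, eεMεY]; ring
  have eMM : ∫ ω, M ω * M ω ∂μ = 1 := by
    rw [expM M hM2, eUM, eWM, eεMM, hsM]; ring
  have eMT : ∫ ω, M ω * T ω ∂μ = a * b + a * c * ρ := by
    rw [expM T hT2, eUT, eWT, eεMT]; ring
  have eYT : ∫ ω, Y ω * T ω ∂μ = a * d * ρ := by
    rw [expY T hT2, eWT, eεYT]; ring
  have eYM : ∫ ω, Y ω * M ω ∂μ = d * b * ρ + d * c := by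
    rw [expY M hM2, eWM, eεYM]; ring
  -- covariances and variances
  have cYT : covar μ Y T = a * d * ρ := (covar_of_meanzero mY).trans eYT
  have cYM : covar μ Y M = d * b * ρ + d * c := (covar_of_meanzero mY).trans eYM
  have cMT : covar μ M T = a * b + a * c * ρ := (covar_of_meanzero mM).trans eMT
  have vT : variance T μ = 1 := by
    rw [variance_eq_sub hT2, mT, ← sqmul T, eTT]; ring
  have vM : variance M μ = 1 := by
    rw [variance_eq_sub hM2, mM, ← sqmul M, eMM]; ring
  simp only [betaT]
  rw [cYT, cYM, cMT, vT, vM]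
  rw [show a * d * ρ * 1 - (d * b * ρ + d * c) * (a * b + a * c * ρ)
      = a * d * ρ * (1 - b ^ 2 - c ^ 2 - b * c * ρ) - a * b * c * d from by ring,
    show 1 * 1 - (a * b + a * c * ρ) ^ 2 = 1 - (a * b + a * c * ρ) ^ 2 from by ring]
end

section
/- Let (Ω, F, μ) be a probability space and let U, W, ε_M, ε_T, ε_Y be square-integrable real random variables, each with mean 0 and variance 1, such that Cov(U, W) = ρ and all other pairs among {U, W, ε_M, ε_T, ε_Y} have covariance 0. Let a, b, c, d, ρ be real numbers with a² ≤ 1, d² ≤ 1, b² + c² + 2bcρ ≤ 1, a ≠ 0, d ≠ 0, ρ ≠ 0, and 1 − (ab + acρ)² ≠ 0. Define M := b·U + c·W + √(1−b²−c²−2bcρ)·ε_M, T := a·U + √(1−a²)·ε_T, and Y := d·W + √(1−d²)·ε_Y. Then the ratio of the adjusted to the unadjusted bias satisfies β_T / Cov(T,Y) = (ρ·(1−b²−c²−bcρ) − bc) / (ρ·(1 − (ab + acρ)²)); in particular this ratio does not depend on d. -/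
open MeasureTheory ProbabilityTheory

section helpers

variable {Ω : Type*} [MeasurableSpace Ω] {μ : Measure Ω} [IsProbabilityMeasure μ]

lemma l2mul {X Y : Ω → ℝ} (hX : MemLp X 2 μ) (hY : MemLp Y 2 μ) :
    Integrable (fun ω => X ω * Y ω) μ := by
  refine Integrable.mono' (hX.integrable_sq.add hY.integrable_sq)
    (hX.aestronglyMeasurable.mul hY.aestronglyMeasurable) (Filter.Eventually.of_forall ?_)
  intro ω
  simp only [Pi.add_apply, Real.norm_eq_abs, abs_mul]
  nlinarith [sq_nonneg (|X ω| - |Y ω|), sq_abs (X ω), sq_abs (Y ω)]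

lemma covar_comm (X Y : Ω → ℝ) : covar μ X Y = covar μ Y X := by
  simp [covar, mul_comm]

lemma covar_add_left {X X' Y : Ω → ℝ} (hX : MemLp X 2 μ) (hX' : MemLp X' 2 μ)
    (hY : MemLp Y 2 μ) :
    covar μ (fun ω => X ω + X' ω) Y = covar μ X Y + covar μ X' Y := by
  have h1 := l2mul hX hY
  have h2 := l2mul hX' hY
  simp only [covar, add_mul]
  rw [integral_add h1 h2, integral_add (hX.integrable one_le_two) (hX'.integrable one_le_two)]
  ring

lemma covar_smul_left (X Y : Ω → ℝ) (c : ℝ) :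
    covar μ (fun ω => c * X ω) Y = c * covar μ X Y := by
  simp only [covar, mul_assoc, integral_const_mul]
  ring

lemma covar_self {X : Ω → ℝ} (hX : MemLp X 2 μ) : covar μ X X = variance X μ := by
  rw [variance_eq_sub hX]
  simp [covar, sq]

lemma covar_comb2 {X1 X2 Y : Ω → ℝ} (h1 : MemLp X1 2 μ) (h2 : MemLp X2 2 μ)
    (hY : MemLp Y 2 μ) (c1 c2 : ℝ) :
    covar μ (fun ω => c1 * X1 ω + c2 * X2 ω) Y
      = c1 * covar μ X1 Y + c2 * covar μ X2 Y := by
  rw [covar_add_left (h1.const_mul c1) (h2.const_mul c2) hY, covar_smul_left, covar_smul_left]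

lemma covar_comb3 {X1 X2 X3 Y : Ω → ℝ} (h1 : MemLp X1 2 μ) (h2 : MemLp X2 2 μ)
    (h3 : MemLp X3 2 μ) (hY : MemLp Y 2 μ) (c1 c2 c3 : ℝ) :
    covar μ (fun ω => c1 * X1 ω + c2 * X2 ω + c3 * X3 ω) Y
      = c1 * covar μ X1 Y + c2 * covar μ X2 Y + c3 * covar μ X3 Y := by
  rw [covar_add_left (X := fun ω => c1 * X1 ω + c2 * X2 ω) (X' := fun ω => c3 * X3 ω)
      ((h1.const_mul c1).add (h2.const_mul c2)) (h3.const_mul c3) hY,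
    covar_comb2 h1 h2 hY, covar_smul_left]

end helpers

/-- The ratio of the adjusted to the unadjusted bias in the M-structure with
correlated latent causes; the ratio does not depend on `d`. -/
theorem stmt4 {Ω : Type*} [MeasurableSpace Ω] (μ : Measure Ω) [IsProbabilityMeasure μ]
    (U W εM εT εY : Ω → ℝ)
    (hU2 : MemLp U 2 μ) (hW2 : MemLp W 2 μ) (hεM2 : MemLp εM 2 μ)
    (hεT2 : MemLp εT 2 μ) (hεY2 : MemLp εY 2 μ)
    (hUm : ∫ ω, U ω ∂μ = 0) (hWm : ∫ ω, W ω ∂μ = 0) (hεMm : ∫ ω, εM ω ∂μ = 0)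
    (hεTm : ∫ ω, εT ω ∂μ = 0) (hεYm : ∫ ω, εY ω ∂μ = 0)
    (hUv : variance U μ = 1) (hWv : variance W μ = 1) (hεMv : variance εM μ = 1)
    (hεTv : variance εT μ = 1) (hεYv : variance εY μ = 1)
    (a b c d ρ : ℝ)
    (hUW : covar μ U W = ρ)
    (hUεM : covar μ U εM = 0) (hUεT : covar μ U εT = 0) (hUεY : covar μ U εY = 0)
    (hWεM : covar μ W εM = 0) (hWεT : covar μ W εT = 0) (hWεY : covar μ W εY = 0)
    (hεMεT : covar μ εM εT = 0) (hεMεY : covar μ εM εY = 0) (hεTεY : covar μ εT εY = 0)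
    (ha : a ^ 2 ≤ 1) (hd : d ^ 2 ≤ 1) (hbc : b ^ 2 + c ^ 2 + 2 * b * c * ρ ≤ 1)
    (ha0 : a ≠ 0) (hd0 : d ≠ 0) (hρ0 : ρ ≠ 0)
    (hne : 1 - (a * b + a * c * ρ) ^ 2 ≠ 0)
    (M T Y : Ω → ℝ)
    (hM : M = fun ω => b * U ω + c * W ω + Real.sqrt (1 - b ^ 2 - c ^ 2 - 2 * b * c * ρ) * εM ω)
    (hT : T = fun ω => a * U ω + Real.sqrt (1 - a ^ 2) * εT ω)
    (hY : Y = fun ω => d * W ω + Real.sqrt (1 - d ^ 2) * εY ω) :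
    betaT μ Y T M / covar μ T Y =
      (ρ * (1 - b ^ 2 - c ^ 2 - b * c * ρ) - b * c) /
        (ρ * (1 - (a * b + a * c * ρ) ^ 2)) := by
  set s := Real.sqrt (1 - b ^ 2 - c ^ 2 - 2 * b * c * ρ) with hs_def
  set t := Real.sqrt (1 - a ^ 2) with ht_def
  set u := Real.sqrt (1 - d ^ 2) with hu_def
  have hs2 : s ^ 2 = 1 - b ^ 2 - c ^ 2 - 2 * b * c * ρ := Real.sq_sqrt (by linarith)
  have ht2 : t ^ 2 = 1 - a ^ 2 := Real.sq_sqrt (by linarith)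
  have hM2 : MemLp M 2 μ := by
    rw [hM]; exact ((hU2.const_mul b).add (hW2.const_mul c)).add (hεM2.const_mul s)
  have hT2 : MemLp T 2 μ := by
    rw [hT]; exact (hU2.const_mul a).add (hεT2.const_mul t)
  have hY2 : MemLp Y 2 μ := by
    rw [hY]; exact (hW2.const_mul d).add (hεY2.const_mul u)
  -- covariances of T, M, Y with the basic variables
  have hcovT : ∀ Z, MemLp Z 2 μ → covar μ T Z = a * covar μ U Z + t * covar μ εT Z := by
    intro Z hZ; rw [hT]; exact covar_comb2 hU2 hεT2 hZ a t
  have hcovY : ∀ Z, MemLp Z 2 μ → covar μ Y Z = d * covar μ W Z + u * covar μ εY Z := by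
    intro Z hZ; rw [hY]; exact covar_comb2 hW2 hεY2 hZ d u
  have hcovM : ∀ Z, MemLp Z 2 μ →
      covar μ M Z = b * covar μ U Z + c * covar μ W Z + s * covar μ εM Z := by
    intro Z hZ; rw [hM]; exact covar_comb3 hU2 hW2 hεM2 hZ b c s
  have hWU : covar μ W U = ρ := by rw [covar_comm W U]; exact hUW
  have cYU : covar μ U Y = d * ρ := by
    rw [covar_comm U Y, hcovY U hU2, hWU, covar_comm εY U, hUεY]; ring
  have cYεT : covar μ εT Y = 0 := by
    rw [covar_comm εT Y, hcovY εT hεT2, hWεT, covar_comm εY εT, hεTεY]; ring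
  have cTY : covar μ T Y = a * d * ρ := by
    rw [hcovT Y hY2, cYU, cYεT]; ring
  have cTU : covar μ U T = a := by
    rw [covar_comm U T, hcovT U hU2, covar_self hU2, hUv, covar_comm εT U, hUεT]; ring
  have cTW : covar μ W T = a * ρ := by
    rw [covar_comm W T, hcovT W hW2, hUW, covar_comm εT W, hWεT]; ring
  have cTεM : covar μ εM T = 0 := by
    rw [covar_comm εM T, hcovT εM hεM2, hUεM, covar_comm εT εM, hεMεT]; ring
  have cMT : covar μ M T = a * b + a * c * ρ := by
    rw [hcovM T hT2, cTU, cTW, cTεM]; ring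
  have cMW : covar μ W M = b * ρ + c := by
    rw [covar_comm W M, hcovM W hW2, hUW, covar_self hW2, hWv, covar_comm εM W, hWεM]; ring
  have cMεY : covar μ εY M = 0 := by
    rw [covar_comm εY M, hcovM εY hεY2, hUεY, hWεY, hεMεY]; ring
  have cYM : covar μ Y M = d * (b * ρ + c) := by
    rw [hcovY M hM2, cMW, cMεY]; ring
  have cTεT : covar μ εT T = t := by
    rw [covar_comm εT T, hcovT εT hεT2, hUεT, covar_self hεT2, hεTv]; ring
  have vT : variance T μ = 1 := by
    rw [← covar_self hT2, hcovT T hT2, cTU, cTεT]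
    linear_combination ht2
  have cMU : covar μ U M = b + c * ρ := by
    rw [covar_comm U M, hcovM U hU2, covar_self hU2, hUv, hWU, covar_comm εM U, hUεM]; ring
  have cMεM : covar μ εM M = s := by
    rw [covar_comm εM M, hcovM εM hεM2, hUεM, hWεM, covar_self hεM2, hεMv]; ring
  have vM : variance M μ = 1 := by
    rw [← covar_self hM2, hcovM M hM2, cMU, cMW, cMεM]
    linear_combination hs2
  -- final algebra
  rw [betaT, covar_comm Y T, cMT, cYM, vT, vM, cTY]
  have had : a * d * ρ ≠ 0 := by
    exact mul_ne_zero (mul_ne_zero ha0 hd0) hρ0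
  field_simp
  ring
end

section
/- Let (Ω, F, μ) be a probability space and let U, W, ε_M, ε_T, ε_Y be square-integrable real random variables, each with mean 0 and variance 1, with all pairwise covariances among {U, W, ε_M, ε_T, ε_Y} equal to 0. Let a, b, c, d, e, f be real numbers with b² + c² ≤ 1, a² + e² + 2abe ≤ 1, and d² + f² + 2cdf ≤ 1. Define M := b·U + c·W + √(1−b²−c²)·ε_M, T := a·U + e·M + √(1−a²−e²−2abe)·ε_T, and Y := d·W + f·M + √(1−d²−f²−2cdf)·ε_Y. If 1 − (ab + e)² ≠ 0, then the adjusted regression coefficient of T satisfies β_T = −abcd / (1 − (ab + e)²). -/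
set_option maxHeartbeats 1000000


open MeasureTheory ProbabilityTheory

lemma mul_integrable_of_L2 {Ω : Type*} [MeasurableSpace Ω] {μ : Measure Ω}
    {f g : Ω → ℝ} (hf : MemLp f 2 μ) (hg : MemLp g 2 μ) :
    Integrable (fun ω => f ω * g ω) μ := by
  have h := (((hf.add hg).integrable_sq.sub hf.integrable_sq).sub hg.integrable_sq).div_const 2
  have heq : (fun ω => f ω * g ω) = fun ω => (((f ω + g ω) ^ 2 - f ω ^ 2) - g ω ^ 2) / 2 := by
    funext ω; ring
  rw [heq]; exact h

lemma combo_integral {Ω : Type*} [MeasurableSpace Ω] (μ : Measure Ω)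
    (X : Fin 5 → Ω → ℝ) (hX : ∀ i, Integrable (X i) μ) (p : Fin 5 → ℝ) :
    ∫ ω, (∑ i, p i * X i ω) ∂μ = ∑ i, p i * ∫ ω, X i ω ∂μ := by
  rw [integral_finset_sum]
  · exact Finset.sum_congr rfl fun i _ => integral_const_mul _ _
  · exact fun i _ => (hX i).const_mul _

lemma combo_integral_mul {Ω : Type*} [MeasurableSpace Ω] (μ : Measure Ω)
    (X : Fin 5 → Ω → ℝ) (hX : ∀ i, MemLp (X i) 2 μ) (p q : Fin 5 → ℝ) :
    ∫ ω, (∑ i, p i * X i ω) * (∑ j, q j * X j ω) ∂μ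
      = ∑ i, ∑ j, p i * q j * ∫ ω, X i ω * X j ω ∂μ := by
  have hmul : ∀ i j : Fin 5, Integrable (fun ω => X i ω * X j ω) μ :=
    fun i j => mul_integrable_of_L2 (hX i) (hX j)
  have heq : ∀ ω, (∑ i, p i * X i ω) * (∑ j, q j * X j ω)
      = ∑ i, ∑ j : Fin 5, p i * q j * (X i ω * X j ω) := by
    intro ω
    rw [Finset.sum_mul_sum]
    exact Finset.sum_congr rfl fun i _ => Finset.sum_congr rfl fun j _ => by ring
  simp_rw [heq]
  rw [integral_finset_sum _ (fun i _ => integrable_finset_sum _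
    (fun j _ => (hmul i j).const_mul _))]
  refine Finset.sum_congr rfl fun i _ => ?_
  rw [integral_finset_sum _ (fun j _ => (hmul i j).const_mul _)]
  exact Finset.sum_congr rfl fun j _ => integral_const_mul _ _

/-- Bias of the adjusted estimator in the Butterfly-structure:
`β_T = −abcd / (1 − (ab + e)²)`. -/
theorem stmt8 {Ω : Type*} [MeasurableSpace Ω] (μ : Measure Ω) [IsProbabilityMeasure μ]
    (U W εM εT εY : Ω → ℝ)
    (hU2 : MemLp U 2 μ) (hW2 : MemLp W 2 μ) (hεM2 : MemLp εM 2 μ)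
    (hεT2 : MemLp εT 2 μ) (hεY2 : MemLp εY 2 μ)
    (hUm : ∫ ω, U ω ∂μ = 0) (hWm : ∫ ω, W ω ∂μ = 0) (hεMm : ∫ ω, εM ω ∂μ = 0)
    (hεTm : ∫ ω, εT ω ∂μ = 0) (hεYm : ∫ ω, εY ω ∂μ = 0)
    (hUv : variance U μ = 1) (hWv : variance W μ = 1) (hεMv : variance εM μ = 1)
    (hεTv : variance εT μ = 1) (hεYv : variance εY μ = 1)
    (hUW : covar μ U W = 0)
    (hUεM : covar μ U εM = 0) (hUεT : covar μ U εT = 0) (hUεY : covar μ U εY = 0)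
    (hWεM : covar μ W εM = 0) (hWεT : covar μ W εT = 0) (hWεY : covar μ W εY = 0)
    (hεMεT : covar μ εM εT = 0) (hεMεY : covar μ εM εY = 0) (hεTεY : covar μ εT εY = 0)
    (a b c d e f : ℝ)
    (hbc : b ^ 2 + c ^ 2 ≤ 1)
    (hae : a ^ 2 + e ^ 2 + 2 * a * b * e ≤ 1)
    (hdf : d ^ 2 + f ^ 2 + 2 * c * d * f ≤ 1)
    (M T Y : Ω → ℝ)
    (hM : M = fun ω => b * U ω + c * W ω + Real.sqrt (1 - b ^ 2 - c ^ 2) * εM ω)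
    (hT : T = fun ω => a * U ω + e * M ω +
      Real.sqrt (1 - a ^ 2 - e ^ 2 - 2 * a * b * e) * εT ω)
    (hY : Y = fun ω => d * W ω + f * M ω +
      Real.sqrt (1 - d ^ 2 - f ^ 2 - 2 * c * d * f) * εY ω)
    (hne : 1 - (a * b + e) ^ 2 ≠ 0) :
    betaT μ Y T M = -(a * b * c * d) / (1 - (a * b + e) ^ 2) := by
  set g := Real.sqrt (1 - b ^ 2 - c ^ 2) with hgdef
  set s := Real.sqrt (1 - a ^ 2 - e ^ 2 - 2 * a * b * e) with hsdef
  set r := Real.sqrt (1 - d ^ 2 - f ^ 2 - 2 * c * d * f) with hrdef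
  have hg2 : g ^ 2 = 1 - b ^ 2 - c ^ 2 := Real.sq_sqrt (by linarith)
  have hs2 : s ^ 2 = 1 - a ^ 2 - e ^ 2 - 2 * a * b * e := Real.sq_sqrt (by linarith)
  have hr2 : r ^ 2 = 1 - d ^ 2 - f ^ 2 - 2 * c * d * f := Real.sq_sqrt (by linarith)
  have hvar1 : ∀ (Z : Ω → ℝ), MemLp Z 2 μ → (∫ ω, Z ω ∂μ) = 0 → variance Z μ = 1 →
      (∫ ω, Z ω * Z ω ∂μ) = 1 := by
    intro Z hZ hZm hZv
    have h := variance_eq_sub hZ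
    rw [hZv, hZm] at h
    have h2 : (∫ ω, Z ω * Z ω ∂μ) = μ[Z ^ 2] := by
      refine integral_congr_ae (Filter.Eventually.of_forall fun ω => ?_); simp [sq]
    rw [h2]; linarith [h]
  have hcov0 : ∀ (Z V : Ω → ℝ), (∫ ω, Z ω ∂μ) = 0 → covar μ Z V = 0 →
      (∫ ω, Z ω * V ω ∂μ) = 0 := by
    intro Z V hZm hc
    unfold covar at hc; rw [hZm] at hc; linarith
  have hsymm : ∀ (Z V : Ω → ℝ),
      (∫ ω, Z ω * V ω ∂μ) = ∫ ω, V ω * Z ω ∂μ := fun Z V =>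
    integral_congr_ae (Filter.Eventually.of_forall fun ω => mul_comm _ _)
  have iUU : (∫ ω, U ω * U ω ∂μ) = 1 := hvar1 _ hU2 hUm hUv
  have iWW : (∫ ω, W ω * W ω ∂μ) = 1 := hvar1 _ hW2 hWm hWv
  have iMM : (∫ ω, εM ω * εM ω ∂μ) = 1 := hvar1 _ hεM2 hεMm hεMv
  have iTT : (∫ ω, εT ω * εT ω ∂μ) = 1 := hvar1 _ hεT2 hεTm hεTv
  have iYY : (∫ ω, εY ω * εY ω ∂μ) = 1 := hvar1 _ hεY2 hεYm hεYv
  have iUW : (∫ ω, U ω * W ω ∂μ) = 0 := hcov0 _ _ hUm hUW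
  have iUM : (∫ ω, U ω * εM ω ∂μ) = 0 := hcov0 _ _ hUm hUεM
  have iUT : (∫ ω, U ω * εT ω ∂μ) = 0 := hcov0 _ _ hUm hUεT
  have iUY : (∫ ω, U ω * εY ω ∂μ) = 0 := hcov0 _ _ hUm hUεY
  have iWM : (∫ ω, W ω * εM ω ∂μ) = 0 := hcov0 _ _ hWm hWεM
  have iWT : (∫ ω, W ω * εT ω ∂μ) = 0 := hcov0 _ _ hWm hWεT
  have iWY : (∫ ω, W ω * εY ω ∂μ) = 0 := hcov0 _ _ hWm hWεY
  have iMT : (∫ ω, εM ω * εT ω ∂μ) = 0 := hcov0 _ _ hεMm hεMεT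
  have iMY : (∫ ω, εM ω * εY ω ∂μ) = 0 := hcov0 _ _ hεMm hεMεY
  have iTY : (∫ ω, εT ω * εY ω ∂μ) = 0 := hcov0 _ _ hεTm hεTεY
  have iWU : (∫ ω, W ω * U ω ∂μ) = 0 := by rw [hsymm]; exact iUW
  have iMU : (∫ ω, εM ω * U ω ∂μ) = 0 := by rw [hsymm]; exact iUM
  have iTU : (∫ ω, εT ω * U ω ∂μ) = 0 := by rw [hsymm]; exact iUT
  have iYU : (∫ ω, εY ω * U ω ∂μ) = 0 := by rw [hsymm]; exact iUY
  have iMW : (∫ ω, εM ω * W ω ∂μ) = 0 := by rw [hsymm]; exact iWM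
  have iTW : (∫ ω, εT ω * W ω ∂μ) = 0 := by rw [hsymm]; exact iWT
  have iYW : (∫ ω, εY ω * W ω ∂μ) = 0 := by rw [hsymm]; exact iWY
  have iTM : (∫ ω, εT ω * εM ω ∂μ) = 0 := by rw [hsymm]; exact iMT
  have iYM : (∫ ω, εY ω * εM ω ∂μ) = 0 := by rw [hsymm]; exact iMY
  have iYT : (∫ ω, εY ω * εT ω ∂μ) = 0 := by rw [hsymm]; exact iTY
  set X : Fin 5 → Ω → ℝ := ![U, W, εM, εT, εY] with hXdef
  have hX2 : ∀ i, MemLp (X i) 2 μ := by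
    intro i; fin_cases i <;> simpa [hXdef] using ‹_›
  have hXi : ∀ i, Integrable (X i) μ := fun i => (hX2 i).integrable one_le_two
  have hXm : ∀ i, (∫ ω, X i ω ∂μ) = 0 := by
    intro i; fin_cases i <;> simpa [hXdef] using ‹_›
  set pM : Fin 5 → ℝ := ![b, c, g, 0, 0] with hpM
  set pT : Fin 5 → ℝ := ![a + e * b, e * c, e * g, s, 0] with hpT
  set pY : Fin 5 → ℝ := ![f * b, d + f * c, f * g, 0, r] with hpY
  have hMc : M = fun ω => ∑ i, pM i * X i ω := by
    funext ω; simp [hM, hpM, hXdef, Fin.sum_univ_five]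
  have hTc : T = fun ω => ∑ i, pT i * X i ω := by
    funext ω; simp [hT, hM, hpT, hXdef, Fin.sum_univ_five]; ring
  have hYc : Y = fun ω => ∑ i, pY i * X i ω := by
    funext ω; simp [hY, hM, hpY, hXdef, Fin.sum_univ_five]; ring
  have hmean : ∀ p : Fin 5 → ℝ, (∫ ω, (∑ i, p i * X i ω) ∂μ) = 0 := by
    intro p; rw [combo_integral μ X hXi p]; simp [hXm]
  have hcov2 : ∀ p q : Fin 5 → ℝ,
      covar μ (fun ω => ∑ i, p i * X i ω) (fun ω => ∑ i, q i * X i ω)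
        = ∑ i, ∑ j, p i * q j * ∫ ω, X i ω * X j ω ∂μ := by
    intro p q
    unfold covar
    rw [hmean p, hmean q, combo_integral_mul μ X hX2 p q]
    ring
  have hvarc : ∀ (Z : Ω → ℝ), MemLp Z 2 μ → variance Z μ = covar μ Z Z := by
    intro Z hZ2
    rw [variance_eq_sub hZ2]
    unfold covar
    congr 1
    · refine integral_congr_ae (Filter.Eventually.of_forall fun ω => ?_); simp [sq]
    · rw [sq]
  have hM2 : MemLp M 2 μ := by
    rw [hM]
    exact ((hU2.const_mul b).add (hW2.const_mul c)).add (hεM2.const_mul g)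
  have hT2 : MemLp T 2 μ := by
    rw [hT]
    exact ((hU2.const_mul a).add (hM2.const_mul e)).add (hεT2.const_mul s)
  have hY2 : MemLp Y 2 μ := by
    rw [hY]
    exact ((hW2.const_mul d).add (hM2.const_mul f)).add (hεY2.const_mul r)
  have cMM : covar μ M M = 1 := by
    rw [hMc, hcov2]
    simp only [hpM, hXdef, Fin.sum_univ_five, Matrix.cons_val_zero, Matrix.cons_val_one,
      Matrix.head_cons, Matrix.cons_val_two, Matrix.tail_cons, Matrix.cons_val_three,
      Matrix.cons_val_four, iUU, iWW, iMM, iTT, iYY, iUW, iUM, iUT, iUY, iWM, iWT, iWY,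
      iMT, iMY, iTY, iWU, iMU, iTU, iYU, iMW, iTW, iYW, iTM, iYM, iYT]
    linear_combination hg2
  have cTT : covar μ T T = 1 := by
    rw [hTc, hcov2]
    simp only [hpT, hXdef, Fin.sum_univ_five, Matrix.cons_val_zero, Matrix.cons_val_one,
      Matrix.head_cons, Matrix.cons_val_two, Matrix.tail_cons, Matrix.cons_val_three,
      Matrix.cons_val_four, iUU, iWW, iMM, iTT, iYY, iUW, iUM, iUT, iUY, iWM, iWT, iWY,
      iMT, iMY, iTY, iWU, iMU, iTU, iYU, iMW, iTW, iYW, iTM, iYM, iYT]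
    linear_combination e ^ 2 * hg2 + hs2
  have cMT : covar μ M T = a * b + e := by
    rw [hMc, hTc, hcov2]
    simp only [hpM, hpT, hXdef, Fin.sum_univ_five, Matrix.cons_val_zero, Matrix.cons_val_one,
      Matrix.head_cons, Matrix.cons_val_two, Matrix.tail_cons, Matrix.cons_val_three,
      Matrix.cons_val_four, iUU, iWW, iMM, iTT, iYY, iUW, iUM, iUT, iUY, iWM, iWT, iWY,
      iMT, iMY, iTY, iWU, iMU, iTU, iYU, iMW, iTW, iYW, iTM, iYM, iYT]
    linear_combination e * hg2
  have cYT : covar μ Y T = a * b * f + e * c * d + e * f := by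
    rw [hYc, hTc, hcov2]
    simp only [hpY, hpT, hXdef, Fin.sum_univ_five, Matrix.cons_val_zero, Matrix.cons_val_one,
      Matrix.head_cons, Matrix.cons_val_two, Matrix.tail_cons, Matrix.cons_val_three,
      Matrix.cons_val_four, iUU, iWW, iMM, iTT, iYY, iUW, iUM, iUT, iUY, iWM, iWT, iWY,
      iMT, iMY, iTY, iWU, iMU, iTU, iYU, iMW, iTW, iYW, iTM, iYM, iYT]
    linear_combination e * f * hg2
  have cYM : covar μ Y M = c * d + f := by
    rw [hYc, hMc, hcov2]
    simp only [hpY, hpM, hXdef, Fin.sum_univ_five, Matrix.cons_val_zero, Matrix.cons_val_one,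
      Matrix.head_cons, Matrix.cons_val_two, Matrix.tail_cons, Matrix.cons_val_three,
      Matrix.cons_val_four, iUU, iWW, iMM, iTT, iYY, iUW, iUM, iUT, iUY, iWM, iWT, iWY,
      iMT, iMY, iTY, iWU, iMU, iTU, iYU, iMW, iTW, iYW, iTM, iYM, iYT]
    linear_combination f * hg2
  have vM : variance M μ = 1 := by rw [hvarc M hM2, cMM]
  have vT : variance T μ = 1 := by rw [hvarc T hT2, cTT]
  unfold betaT
  rw [vM, vT, cMT, cYT, cYM,
    show (a * b * f + e * c * d + e * f) * 1 - (c * d + f) * (a * b + e)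
      = -(a * b * c * d) by ring,
    show (1 : ℝ) * 1 - (a * b + e) ^ 2 = 1 - (a * b + e) ^ 2 by ring]
end

section
/- Let U, W, ε_M, ε_T, ε_Y be independent standard Gaussian random variables on a probability space (Ω, F, μ). Let a, b, c, d, e, f, α be real numbers with b² + c² ≤ 1, a² + e² + 2abe ≤ 1, and d² + f² + 2cdf ≤ 1. Define M := b·U + c·W + √(1−b²−c²)·ε_M, T* := a·U + e·M + √(1−a²−e²−2abe)·ε_T, Y := d·W + f·M + √(1−d²−f²−2cdf)·ε_Y, and the binary treatment T := 1{T* ≥ α}. Then E[Y | T = 1] − E[Y | T = 0] = (cde + abf + ef)·η(α). -/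
open MeasureTheory ProbabilityTheory

/-- Standard normal CDF `Φ`. -/
noncomputable def gaussPhi (z : ℝ) : ℝ := ((gaussianReal 0 1) (Set.Iic z)).toReal

/-- Standard normal density `φ`. -/
noncomputable def gaussPdf (z : ℝ) : ℝ := gaussianPDFReal 0 1 z

/-- `η(z) = φ(z) / (Φ(z) Φ(−z))`. -/
noncomputable def etaFn (z : ℝ) : ℝ := gaussPdf z / (gaussPhi z * gaussPhi (-z))

/-- Conditional expectation of `X` given the event `A`: `E[X | A] = (∫_A X dμ) / μ(A)`. -/
noncomputable def condExpEvent {Ω : Type*} [MeasurableSpace Ω] (μ : Measure Ω)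
    (X : Ω → ℝ) (A : Set Ω) : ℝ :=
  (∫ ω in A, X ω ∂μ) / (μ A).toReal

open MeasureTheory ProbabilityTheory Real Set Filter
open scoped NNReal ENNReal

namespace Stmt15Aux

notation "γ" => gaussianReal 0 1



lemma gdensity : (gaussianReal 0 1 : Measure ℝ) = volume.withDensity (gaussianPDF 0 1) :=
  gaussianReal_of_var_ne_zero 0 one_ne_zero

lemma pdf_eq (x : ℝ) : gaussianPDFReal 0 1 x = (Real.sqrt (2 * π))⁻¹ * rexp (-x ^ 2 / 2) := by
  simp [gaussianPDFReal]

lemma pdf_nonneg (x : ℝ) : 0 ≤ gaussianPDFReal 0 1 x := gaussianPDFReal_nonneg 0 1 x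

lemma hasDerivAt_negpdf (x : ℝ) :
    HasDerivAt (fun y => -gaussianPDFReal 0 1 y) (x * gaussianPDFReal 0 1 x) x := by
  have h : ∀ y : ℝ, -gaussianPDFReal 0 1 y = -(Real.sqrt (2 * π))⁻¹ * rexp (-y ^ 2 / 2) := by
    intro y; rw [pdf_eq]; ring
  simp_rw [h, pdf_eq]
  have h1 : HasDerivAt (fun y : ℝ => -y ^ 2 / 2) (-x) x := by
    have := ((hasDerivAt_pow 2 x).neg).div_const 2
    simpa using this.congr_deriv (by ring)
  have h2 := (h1.exp).const_mul (-(Real.sqrt (2 * π))⁻¹)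
  exact h2.congr_deriv (by ring)

lemma tendsto_negpdf : Tendsto (fun y => -gaussianPDFReal 0 1 y) atTop (nhds 0) := by
  simp_rw [pdf_eq]
  rw [show (0:ℝ) = -((Real.sqrt (2 * π))⁻¹ * 0) by ring]
  refine Tendsto.neg (Tendsto.const_mul _ ?_)
  refine Real.tendsto_exp_atBot.comp ?_
  have : Tendsto (fun y : ℝ => y ^ 2 / 2) atTop atTop :=
    (tendsto_pow_atTop (two_ne_zero)).atTop_div_const (by norm_num)
  have h2 := tendsto_neg_atTop_atBot.comp this
  refine h2.congr (fun y => ?_)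
  simp [Function.comp, neg_div]

lemma integrable_id_mul_pdf : Integrable (fun x => x * gaussianPDFReal 0 1 x) := by
  have h := (integrable_mul_exp_neg_mul_sq (b := (2:ℝ)⁻¹) (by norm_num)).const_mul
    ((Real.sqrt (2 * π))⁻¹)
  refine h.congr ?_
  filter_upwards with x
  rw [pdf_eq]; ring_nf

lemma integrableOn_id_mul_pdf (s : Set ℝ) :
    IntegrableOn (fun x => x * gaussianPDFReal 0 1 x) s := integrable_id_mul_pdf.integrableOn

lemma integral_Ioi_id_pdf (α : ℝ) :
    ∫ x in Ioi α, x * gaussianPDFReal 0 1 x = gaussPdf α := by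
  have := integral_Ioi_of_hasDerivAt_of_tendsto' (f := fun y => -gaussianPDFReal 0 1 y)
    (f' := fun x => x * gaussianPDFReal 0 1 x) (a := α)
    (fun x _ => hasDerivAt_negpdf x) (integrableOn_id_mul_pdf _) tendsto_negpdf
  rw [this]; simp [gaussPdf]



/-- indicator of `[α, ∞)` -/
noncomputable def indAt (α t : ℝ) : ℝ := if α ≤ t then 1 else 0

lemma measurable_indAt (α : ℝ) : Measurable (indAt α) := by
  unfold indAt
  exact Measurable.ite measurableSet_Ici measurable_const measurable_const

lemma indAt_nonneg (α t : ℝ) : 0 ≤ indAt α t := by unfold indAt; positivity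

lemma indAt_le_one (α t : ℝ) : indAt α t ≤ 1 := by
  unfold indAt; split <;> norm_num

lemma integrable_id_gauss : Integrable (fun x => x) γ := by
  rw [gdensity,
    integrable_withDensity_iff (measurable_gaussianPDF 0 1)
      (Filter.Eventually.of_forall fun x => ENNReal.ofReal_lt_top)]
  refine integrable_id_mul_pdf.congr ?_
  filter_upwards with x
  rw [gaussianPDF_def, ENNReal.toReal_ofReal (pdf_nonneg x)]

lemma map_neg_gauss : Measure.map (fun x : ℝ => -1 * x) γ = γ := by
  have h := gaussianReal_map_const_mul (μ := 0) (v := 1) (-1)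
  have h2 : (NNReal.mk ((-1:ℝ)^2) (sq_nonneg _)) * 1 = 1 := by
    ext; norm_num
  rw [h2] at h
  simpa using h

lemma integral_id_gauss : ∫ x, x ∂(gaussianReal 0 1) = 0 := by
  have h : ∫ x, x ∂(gaussianReal 0 1) = ∫ x, x ∂(Measure.map (fun x : ℝ => -1 * x) γ) := by
    rw [map_neg_gauss]
  rw [integral_map (φ := fun x : ℝ => -1 * x) (f := fun x : ℝ => x) (by fun_prop)
    (by rw [map_neg_gauss]; exact aestronglyMeasurable_id)] at h
  simp only [neg_one_mul] at h
  have h2 := integral_neg (μ := γ) (f := fun x : ℝ => x)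
  simp only [h2] at h
  linarith

lemma integral_id_indAt (α : ℝ) : ∫ x, x * indAt α x ∂(gaussianReal 0 1) = gaussPdf α := by
  have h : (fun x : ℝ => x * indAt α x) = Set.indicator (Ici α) (fun x => x) := by
    funext x
    by_cases hx : α ≤ x <;> simp [indAt, hx, Set.indicator_apply, Set.mem_Ici]
  rw [h, integral_indicator measurableSet_Ici, gdensity,
    restrict_withDensity measurableSet_Ici, gaussianPDF_def]
  have h2 : ∀ x : ℝ, ENNReal.ofReal (gaussianPDFReal 0 1 x)
      = ((gaussianPDFReal 0 1 x).toNNReal : ℝ≥0∞) := fun x => rfl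
  simp_rw [h2]
  rw [integral_withDensity_eq_integral_smul ((measurable_gaussianPDFReal 0 1).real_toNNReal)]
  have h3 : ∀ x : ℝ, (gaussianPDFReal 0 1 x).toNNReal • x = x * gaussianPDFReal 0 1 x := by
    intro x
    rw [NNReal.smul_def, smul_eq_mul, Real.coe_toNNReal _ (pdf_nonneg x)]
    ring
  simp_rw [h3]
  rw [integral_Ici_eq_integral_Ioi, integral_Ioi_id_pdf]

lemma gauss_singleton (x : ℝ) : γ {x} = 0 := by
  rw [gdensity, withDensity_apply _ (measurableSet_singleton x),
    Measure.restrict_eq_zero.mpr (volume_singleton), lintegral_zero_measure]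

lemma gauss_Ici (x : ℝ) : γ (Ici x) = γ (Iic (-x)) := by
  conv_lhs => rw [← map_neg_gauss]
  rw [Measure.map_apply (by fun_prop) measurableSet_Ici]
  congr 1
  ext y
  simp only [Set.mem_preimage, Set.mem_Ici, Set.mem_Iic]
  constructor <;> intro h <;> linarith

lemma gauss_Ici_toReal (x : ℝ) : (γ (Ici x)).toReal = gaussPhi (-x) := by
  rw [gauss_Ici]; rfl

lemma phi_add (x : ℝ) : gaussPhi x + gaussPhi (-x) = 1 := by
  have hIci : γ (Ici x) = γ (Ioi x) := by
    rw [← Set.Ioi_union_left, measure_union (by simp) (measurableSet_singleton x),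
      gauss_singleton, add_zero]
  have h1 : γ (Iic x) + γ (Ici x) = 1 := by
    rw [hIci, ← compl_Iic, measure_add_measure_compl measurableSet_Iic, measure_univ]
  have h2 := gauss_Ici_toReal x
  have h3 : (γ (Iic x)).toReal + (γ (Ici x)).toReal = 1 := by
    rw [← ENNReal.toReal_add (measure_ne_top _ _) (measure_ne_top _ _), h1, ENNReal.toReal_one]
  rw [← h2]
  exact h3

lemma phi_pos (x : ℝ) : 0 < gaussPhi x := by
  unfold gaussPhi
  refine ENNReal.toReal_pos ?_ (measure_ne_top _ _)
  rw [gdensity, Ne, withDensity_apply_eq_zero (measurable_gaussianPDF 0 1)]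
  have h : {y : ℝ | gaussianPDF 0 1 y ≠ 0} ∩ Iic x = Iic x := by
    refine Set.inter_eq_right.mpr fun y _ => ?_
    exact (gaussianPDF_pos 0 one_ne_zero y).ne'
  rw [h]
  simp


variable {p q : ℝ}

/-- the rotation `(x, z) ↦ (p x + q z, q x - p z)` as a linear map -/
def rotL (p q : ℝ) : (ℝ × ℝ) →ₗ[ℝ] (ℝ × ℝ) where
  toFun z := (p * z.1 + q * z.2, q * z.1 - p * z.2)
  map_add' x y := by simp [Prod.ext_iff]; constructor <;> ring
  map_smul' c x := by simp [Prod.ext_iff, smul_eq_mul]; constructor <;> ring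

lemma rotL_det (hpq : p ^ 2 + q ^ 2 = 1) : LinearMap.det (rotL p q) = -1 := by
  rw [← LinearMap.det_toMatrix (Module.Basis.finTwoProd ℝ), Matrix.det_fin_two]
  simp only [LinearMap.toMatrix_apply, Module.Basis.finTwoProd_zero, Module.Basis.finTwoProd_one,
    Module.Basis.coe_finTwoProd_repr, rotL, LinearMap.coe_mk, AddHom.coe_mk]
  simp only [mul_one, mul_zero, add_zero, zero_add, sub_zero, zero_sub,
    Matrix.cons_val_zero, Matrix.cons_val_one, Matrix.head_cons]
  nlinarith [hpq]

lemma map_rotL_volume (hpq : p ^ 2 + q ^ 2 = 1) :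
    Measure.map (fun z : ℝ × ℝ => (p * z.1 + q * z.2, q * z.1 - p * z.2))
      (volume : Measure (ℝ × ℝ)) = volume := by
  haveI : (volume : Measure (ℝ × ℝ)).IsAddHaarMeasure :=
    (Measure.volume_eq_prod ℝ ℝ) ▸ Measure.prod.instIsAddHaarMeasure _ _
  have h := Measure.map_linearMap_addHaar_eq_smul_addHaar (volume : Measure (ℝ × ℝ))
    (f := rotL p q) (by rw [rotL_det hpq]; norm_num)
  have hco : ⇑(rotL p q) = fun z : ℝ × ℝ => (p * z.1 + q * z.2, q * z.1 - p * z.2) := rfl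
  rw [hco] at h
  rw [h, rotL_det hpq]
  norm_num

lemma measurable_rot : Measurable (fun z : ℝ × ℝ => (p * z.1 + q * z.2, q * z.1 - p * z.2)) := by
  fun_prop

lemma pdf_mul_rot {a b c d : ℝ} (h : a ^ 2 + b ^ 2 = c ^ 2 + d ^ 2) :
    gaussianPDFReal 0 1 a * gaussianPDFReal 0 1 b
      = gaussianPDFReal 0 1 c * gaussianPDFReal 0 1 d := by
  have : ∀ x y : ℝ, gaussianPDFReal 0 1 x * gaussianPDFReal 0 1 y
      = (Real.sqrt (2 * π))⁻¹ ^ 2 * rexp (-(x ^ 2 + y ^ 2) / 2) := by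
    intro x y
    rw [show gaussianPDFReal 0 1 x = (Real.sqrt (2 * π))⁻¹ * rexp (-x ^ 2 / 2) by
        simp [gaussianPDFReal],
      show gaussianPDFReal 0 1 y = (Real.sqrt (2 * π))⁻¹ * rexp (-y ^ 2 / 2) by
        simp [gaussianPDFReal], mul_mul_mul_comm, ← Real.exp_add]
    ring_nf
  rw [this, this, h]

lemma gauss_prod_density :
    (gaussianReal 0 1).prod (gaussianReal 0 1)
      = (volume : Measure (ℝ × ℝ)).withDensity
          (fun z => gaussianPDF 0 1 z.1 * gaussianPDF 0 1 z.2) := by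
  refine (Measure.prod_eq fun s t hs ht => ?_)
  rw [Measure.volume_eq_prod, withDensity_apply _ (hs.prod ht), ← Measure.prod_restrict,
    lintegral_prod_mul (measurable_gaussianPDF 0 1).aemeasurable
      (measurable_gaussianPDF 0 1).aemeasurable]
  rw [gaussianReal_of_var_ne_zero 0 one_ne_zero, withDensity_apply _ hs, withDensity_apply _ ht]

lemma map_rot_gauss (hpq : p ^ 2 + q ^ 2 = 1) :
    Measure.map (fun z : ℝ × ℝ => (p * z.1 + q * z.2, q * z.1 - p * z.2))
      ((gaussianReal 0 1).prod (gaussianReal 0 1)) = (gaussianReal 0 1).prod (gaussianReal 0 1) := by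
  set rot := fun z : ℝ × ℝ => (p * z.1 + q * z.2, q * z.1 - p * z.2) with hrot
  set D := fun z : ℝ × ℝ => gaussianPDF 0 1 z.1 * gaussianPDF 0 1 z.2 with hD
  have hDmeas : Measurable D := by
    exact ((measurable_gaussianPDF 0 1).comp measurable_fst).mul ((measurable_gaussianPDF 0 1).comp measurable_snd)
  have hDrot : ∀ z : ℝ × ℝ, D (rot z) = D z := by
    intro z
    simp only [hD, hrot, gaussianPDF]
    rw [← ENNReal.ofReal_mul (gaussianPDFReal_nonneg 0 1 _),
      ← ENNReal.ofReal_mul (gaussianPDFReal_nonneg 0 1 _)]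
    congr 1
    apply pdf_mul_rot
    nlinarith [hpq]
  ext s hs
  rw [Measure.map_apply measurable_rot hs, gauss_prod_density,
    withDensity_apply _ (hs.preimage measurable_rot), withDensity_apply _ hs]
  have hvol := map_rotL_volume hpq
  calc ∫⁻ z in rot ⁻¹' s, D z ∂(volume : Measure (ℝ × ℝ))
      = ∫⁻ z in rot ⁻¹' s, D (rot z) ∂(volume : Measure (ℝ × ℝ)) := by
        refine setLIntegral_congr_fun (hs.preimage measurable_rot) ?_
        exact fun z _ => (hDrot z).symm
    _ = ∫⁻ y in s, D y ∂(volume : Measure (ℝ × ℝ)) := by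
        rw [← setLIntegral_map hs hDmeas measurable_rot, hvol]


variable {Ω : Type*} [MeasurableSpace Ω] {μ : Measure Ω} [IsProbabilityMeasure μ]
variable {X Z : Ω → ℝ}

lemma map_const_mul_gauss {v : ℝ≥0} (hX : Measurable X)
    (h : Measure.map X μ = gaussianReal 0 v) (c : ℝ) :
    Measure.map (fun ω => c * X ω) μ = gaussianReal 0 (NNReal.mk (c ^ 2) (sq_nonneg c) * v) := by
  rw [show (fun ω => c * X ω) = (c * ·) ∘ X from rfl, ← Measure.map_map (by fun_prop) hX, h,
    gaussianReal_map_const_mul]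
  simp

lemma sum2_std (hXm : Measurable X) (hZm : Measurable Z)
    (hX : Measure.map X μ = gaussianReal 0 1) (hZ : Measure.map Z μ = gaussianReal 0 1)
    (hindep : IndepFun X Z μ) {p q : ℝ} (hpq : p ^ 2 + q ^ 2 = 1) :
    Measure.map (fun ω => p * X ω + q * Z ω) μ = gaussianReal 0 1 := by
  have hpair : Measure.map (fun ω => (X ω, Z ω)) μ = (gaussianReal 0 1).prod (gaussianReal 0 1) := by
    rw [(indepFun_iff_map_prod_eq_prod_map_map hXm.aemeasurable hZm.aemeasurable).mp hindep,
      hX, hZ]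
  have hcomp : (fun ω => p * X ω + q * Z ω)
      = (fun z : ℝ × ℝ => p * z.1 + q * z.2) ∘ (fun ω => (X ω, Z ω)) := rfl
  rw [hcomp, ← Measure.map_map (by fun_prop) (by fun_prop), hpair]
  have hfst : (fun z : ℝ × ℝ => p * z.1 + q * z.2)
      = Prod.fst ∘ (fun z : ℝ × ℝ => (p * z.1 + q * z.2, q * z.1 - p * z.2)) := rfl
  rw [hfst, ← Measure.map_map measurable_fst (by fun_prop), map_rot_gauss hpq]
  simp

lemma ae_eq_zero_of_map_dirac (hXm : Measurable X)
    (h : Measure.map X μ = Measure.dirac 0) : X =ᵐ[μ] 0 := by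
  have h0 : Measure.map X μ {(0:ℝ)}ᶜ = 0 := by rw [h]; simp
  rw [Measure.map_apply hXm (measurableSet_singleton (0:ℝ)).compl] at h0
  rw [Filter.EventuallyEq, ae_iff]
  have hset : {ω | ¬ X ω = (0 : Ω → ℝ) ω} = X ⁻¹' {(0:ℝ)}ᶜ := by ext ω; simp
  rw [hset]
  exact h0

lemma sum2_gen {v w : ℝ≥0} (hXm : Measurable X) (hZm : Measurable Z)
    (hX : Measure.map X μ = gaussianReal 0 v) (hZ : Measure.map Z μ = gaussianReal 0 w)
    (hindep : IndepFun X Z μ) :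
    Measure.map (fun ω => X ω + Z ω) μ = gaussianReal 0 (v + w) := by
  by_cases hv : v = 0
  · subst hv
    have hX0 : X =ᵐ[μ] 0 := by
      refine ae_eq_zero_of_map_dirac hXm ?_
      rw [hX, gaussianReal_zero_var]
    have : (fun ω => X ω + Z ω) =ᵐ[μ] Z := by
      filter_upwards [hX0] with ω hω
      simp [hω]
    rw [Measure.map_congr this, hZ, zero_add]
  by_cases hw : w = 0
  · subst hw
    have hZ0 : Z =ᵐ[μ] 0 := by
      refine ae_eq_zero_of_map_dirac hZm ?_
      rw [hZ, gaussianReal_zero_var]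
    have : (fun ω => X ω + Z ω) =ᵐ[μ] X := by
      filter_upwards [hZ0] with ω hω
      simp [hω]
    rw [Measure.map_congr this, hX, add_zero]
  -- main case
  have hv' : (0:ℝ) < v := lt_of_le_of_ne (v.coe_nonneg) (by exact_mod_cast (Ne.symm hv))
  have hw' : (0:ℝ) < w := lt_of_le_of_ne (w.coe_nonneg) (by exact_mod_cast (Ne.symm hw))
  set s : ℝ := Real.sqrt ((v : ℝ) + w) with hs
  have hs' : 0 < s := Real.sqrt_pos.mpr (by positivity)
  set sv : ℝ := Real.sqrt v with hsv
  set sw : ℝ := Real.sqrt w with hsw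
  have hsv' : 0 < sv := Real.sqrt_pos.mpr hv'
  have hsw' : 0 < sw := Real.sqrt_pos.mpr hw'
  have hX' : Measure.map (fun ω => sv⁻¹ * X ω) μ = gaussianReal 0 1 := by
    rw [map_const_mul_gauss hXm hX]
    congr 1
    ext
    push_cast
    rw [inv_pow, Real.sq_sqrt hv'.le]
    field_simp
  have hZ' : Measure.map (fun ω => sw⁻¹ * Z ω) μ = gaussianReal 0 1 := by
    rw [map_const_mul_gauss hZm hZ]
    congr 1
    ext
    push_cast
    rw [inv_pow, Real.sq_sqrt hw'.le]
    field_simp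
  have hindep' : IndepFun (fun ω => sv⁻¹ * X ω) (fun ω => sw⁻¹ * Z ω) μ :=
    hindep.comp (measurable_const_mul sv⁻¹) (measurable_const_mul sw⁻¹)
  have hpq : (sv / s) ^ 2 + (sw / s) ^ 2 = 1 := by
    rw [div_pow, div_pow, Real.sq_sqrt hv'.le, Real.sq_sqrt hw'.le, Real.sq_sqrt (by positivity)]
    field_simp
  have hstd := sum2_std (by fun_prop) (by fun_prop) hX' hZ' hindep' hpq
  have heq : (fun ω => (sv / s) * (sv⁻¹ * X ω) + (sw / s) * (sw⁻¹ * Z ω))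
      = fun ω => s⁻¹ * (X ω + Z ω) := by
    funext ω
    field_simp
  rw [heq] at hstd
  have hfin : Measure.map (fun ω => s * (s⁻¹ * (X ω + Z ω))) μ
      = gaussianReal 0 (NNReal.mk (s ^ 2) (sq_nonneg s) * 1) :=
    map_const_mul_gauss (by fun_prop) hstd s
  have hss : (fun ω => s * (s⁻¹ * (X ω + Z ω))) = fun ω => X ω + Z ω := by
    funext ω
    field_simp
  rw [hss] at hfin
  rw [hfin]
  congr 1
  ext
  push_cast
  rw [mul_one, Real.sq_sqrt (by positivity)]


variable {ι : Type*} [DecidableEq ι] {ξ : ι → Ω → ℝ}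

/-- independence of one variable and a linear combination of the others -/
lemma indep_single_combo (hmeas : ∀ i, Measurable (ξ i))
    (hindep : iIndepFun ξ μ) (i : ι) (s : Finset ι) (hi : i ∉ s)
    (c : ι → ℝ) :
    IndepFun (ξ i) (fun ω => ∑ j ∈ s, c j * ξ j ω) μ := by
  have h := hindep.indepFun_finset {i} s (by simpa using hi) hmeas
  have h2 := h.comp (φ := fun g : ({i} : Finset ι) → ℝ => g ⟨i, by simp⟩)
    (ψ := fun g : {x // x ∈ s} → ℝ => ∑ j : {x // x ∈ s}, c (j : ι) * g j)
    (measurable_pi_apply (X := fun _ : ({i} : Finset ι) => ℝ) (⟨i, by simp⟩ : ({i} : Finset ι))) (by fun_prop)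
  have e1 : (fun g : ({i} : Finset ι) → ℝ => g ⟨i, by simp⟩)
      ∘ (fun a (j : ({i} : Finset ι)) => ξ j a) = ξ i := rfl
  have e2 : (fun g : {x // x ∈ s} → ℝ => ∑ j : {x // x ∈ s}, c (j : ι) * g j)
      ∘ (fun a (j : {x // x ∈ s}) => ξ (j : ι) a) = fun ω => ∑ j ∈ s, c j * ξ j ω := by
    funext ω
    simp only [Function.comp_apply]
    rw [← Finset.sum_attach s (fun j => c j * ξ j ω), Finset.univ_eq_attach]
  rwa [e1, e2] at h2

lemma map_combo_gauss (hmeas : ∀ i, Measurable (ξ i))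
    (hgauss : ∀ i, Measure.map (ξ i) μ = gaussianReal 0 1)
    (hindep : iIndepFun ξ μ) (c : ι → ℝ) (s : Finset ι) :
    Measure.map (fun ω => ∑ j ∈ s, c j * ξ j ω) μ
      = gaussianReal 0 (NNReal.mk (∑ j ∈ s, (c j) ^ 2) (by positivity)) := by
  induction s using Finset.induction_on with
  | empty =>
      simp only [Finset.sum_empty]
      rw [Measure.map_const]
      simp only [measure_univ, one_smul]
      have : (NNReal.mk (0:ℝ) (le_refl 0)) = 0 := rfl
      rw [this, gaussianReal_zero_var]
  | @insert i s' hi ih =>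
      have hX : Measure.map (fun ω => c i * ξ i ω) μ = gaussianReal 0 (NNReal.mk (c i ^ 2) (sq_nonneg _)) := by
        have := map_const_mul_gauss (hmeas i) (hgauss i) (c i)
        rwa [mul_one] at this
      have hZ := ih
      have hind : IndepFun (fun ω => c i * ξ i ω) (fun ω => ∑ j ∈ s', c j * ξ j ω) μ :=
        (indep_single_combo hmeas hindep i s' hi c).comp (measurable_const_mul (c i)) measurable_id
      have := sum2_gen (by fun_prop)
        (by exact Finset.measurable_sum s' (fun j _ => (hmeas j).const_mul (c j))) hX hZ hind
      have hsum : (fun ω => c i * ξ i ω + ∑ j ∈ s', c j * ξ j ω)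
          = fun ω => ∑ j ∈ insert i s', c j * ξ j ω := by
        funext ω
        rw [Finset.sum_insert hi]
      rw [hsum] at this
      rw [this]
      congr 1
      ext
      push_cast
      rw [Finset.sum_insert hi]


lemma integrable_id_mul_indAt (α : ℝ) : Integrable (fun x => x * indAt α x) γ := by
  refine Integrable.mono' integrable_id_gauss.abs ?_ ?_
  · exact (measurable_id.mul (measurable_indAt α)).aestronglyMeasurable
  · filter_upwards with x
    rw [Real.norm_eq_abs, abs_mul]
    calc |x| * |indAt α x| ≤ |x| * 1 := by
          refine mul_le_mul_of_nonneg_left ?_ (abs_nonneg x)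
          rw [abs_of_nonneg (indAt_nonneg α x)]
          exact indAt_le_one α x
      _ = |x| := mul_one _

lemma integrable_indAt (α : ℝ) : Integrable (indAt α) γ := by
  refine Integrable.mono' (integrable_const (1:ℝ)) (measurable_indAt α).aestronglyMeasurable ?_
  filter_upwards with x
  rw [Real.norm_eq_abs, abs_of_nonneg (indAt_nonneg α x)]
  exact indAt_le_one α x

lemma measurable_id_mul_indAt' (α p : ℝ) : Measurable (fun x : ℝ => x * indAt α (p * x)) :=
  measurable_id'.mul ((measurable_indAt α).comp (measurable_const_mul p))

lemma step3 {X Z : Ω → ℝ} (hXm : Measurable X) (hZm : Measurable Z)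
    (hX : Measure.map X μ = gaussianReal 0 1) (hZ : Measure.map Z μ = gaussianReal 0 1)
    (hindep : IndepFun X Z μ) {p q : ℝ} (hpq : p ^ 2 + q ^ 2 = 1) (α : ℝ) :
    ∫ ω, X ω * indAt α (p * X ω + q * Z ω) ∂μ = p * gaussPdf α := by
  have hpair : Measure.map (fun ω => (X ω, Z ω)) μ
      = (gaussianReal 0 1).prod (gaussianReal 0 1) := by
    rw [(indepFun_iff_map_prod_eq_prod_map_map hXm.aemeasurable hZm.aemeasurable).mp hindep,
      hX, hZ]
  have hmF : Measurable (fun z : ℝ × ℝ => z.1 * indAt α (p * z.1 + q * z.2)) :=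
    measurable_fst.mul ((measurable_indAt α).comp (by fun_prop))
  have h1 : ∫ ω, X ω * indAt α (p * X ω + q * Z ω) ∂μ
      = ∫ z : ℝ × ℝ, z.1 * indAt α (p * z.1 + q * z.2)
          ∂((gaussianReal 0 1).prod (gaussianReal 0 1)) := by
    rw [← hpair, integral_map (by fun_prop) hmF.aestronglyMeasurable]
  rw [h1, ← map_rot_gauss hpq,
    integral_map (φ := fun z : ℝ × ℝ => (p * z.1 + q * z.2, q * z.1 - p * z.2))
      (f := fun z : ℝ × ℝ => z.1 * indAt α (p * z.1 + q * z.2)) (by fun_prop) (by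
      rw [map_rot_gauss hpq]; exact hmF.aestronglyMeasurable)]
  have harg : ∀ y : ℝ × ℝ, p * (p * y.1 + q * y.2) + q * (q * y.1 - p * y.2) = y.1 := by
    intro y
    linear_combination y.1 * hpq
  have hsplit : (fun y : ℝ × ℝ =>
        (p * y.1 + q * y.2) * indAt α (p * (p * y.1 + q * y.2) + q * (q * y.1 - p * y.2)))
      = fun y : ℝ × ℝ => p * ((fun x => x * indAt α x) y.1 * (fun _ : ℝ => (1:ℝ)) y.2)
          + q * ((fun x => indAt α x) y.1 * (fun x : ℝ => x) y.2) := by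
    funext y
    rw [harg y]
    ring
  rw [hsplit]
  have IA : Integrable (fun y : ℝ × ℝ => (fun x => x * indAt α x) y.1 * (fun _ : ℝ => (1:ℝ)) y.2)
      ((gaussianReal 0 1).prod (gaussianReal 0 1)) :=
    (integrable_id_mul_indAt α).mul_prod (integrable_const 1)
  have IB : Integrable (fun y : ℝ × ℝ => (fun x => indAt α x) y.1 * (fun x : ℝ => x) y.2)
      ((gaussianReal 0 1).prod (gaussianReal 0 1)) :=
    (integrable_indAt α).mul_prod integrable_id_gauss
  rw [integral_add (IA.const_mul p) (IB.const_mul q), integral_const_mul _ _, integral_const_mul _ _,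
    integral_prod_mul (f := fun x : ℝ => x * indAt α x) (g := fun _ : ℝ => (1:ℝ)),
    integral_prod_mul (f := fun x : ℝ => indAt α x) (g := fun x : ℝ => x),
    integral_id_indAt, integral_id_gauss]
  simp

lemma key {X R : Ω → ℝ} (hXm : Measurable X) (hRm : Measurable R)
    (hX : Measure.map X μ = gaussianReal 0 1) {p : ℝ} {v : ℝ≥0} (hpv : p ^ 2 + (v : ℝ) = 1)
    (hR : Measure.map R μ = gaussianReal 0 v) (hindep : IndepFun X R μ) (α : ℝ) :
    ∫ ω, X ω * indAt α (p * X ω + R ω) ∂μ = p * gaussPdf α := by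
  by_cases hv : v = 0
  · subst hv
    have hp2 : p ^ 2 = 1 := by simpa using hpv
    have hR0 : R =ᵐ[μ] 0 := ae_eq_zero_of_map_dirac hRm (by rw [hR, gaussianReal_zero_var])
    have hcong : (fun ω => X ω * indAt α (p * X ω + R ω))
        =ᵐ[μ] fun ω => X ω * indAt α (p * X ω) := by
      filter_upwards [hR0] with ω hω
      simp [hω]
    rw [integral_congr_ae hcong]
    have h2 : ∫ ω, X ω * indAt α (p * X ω) ∂μ = ∫ x, x * indAt α (p * x) ∂(gaussianReal 0 1) := by
      rw [← hX, integral_map (φ := X) (f := fun x : ℝ => x * indAt α (p * x)) hXm.aemeasurable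
        (measurable_id_mul_indAt' α p).aestronglyMeasurable]
    rw [h2]
    have hmapp : Measure.map (fun x : ℝ => p * x) (gaussianReal 0 1) = gaussianReal 0 1 := by
      have := gaussianReal_map_const_mul (μ := 0) (v := 1) p
      have h3 : (NNReal.mk (p ^ 2) (sq_nonneg p)) * 1 = 1 := by
        ext; push_cast; rw [hp2]; norm_num
      rw [h3] at this
      simpa using this
    have h4 : ∫ x, x * indAt α (p * x) ∂(gaussianReal 0 1)
        = ∫ x, x * indAt α (p * x) ∂(Measure.map (fun x : ℝ => p * x) (gaussianReal 0 1)) := by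
      rw [hmapp]
    rw [h4, integral_map (φ := fun x : ℝ => p * x) (f := fun x : ℝ => x * indAt α (p * x))
      (by fun_prop) (by
      rw [hmapp]
      exact (measurable_id_mul_indAt' α p).aestronglyMeasurable)]
    have h5 : (fun x : ℝ => (p * x) * indAt α (p * (p * x))) = fun x : ℝ => p * (x * indAt α x) := by
      funext x
      have : p * (p * x) = x := by linear_combination x * hp2
      rw [this]
      ring
    rw [h5, integral_const_mul _ _, integral_id_indAt]
  · have hv' : (0:ℝ) < v := lt_of_le_of_ne v.coe_nonneg (by exact_mod_cast (Ne.symm hv))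
    set s : ℝ := Real.sqrt v with hs
    have hs' : 0 < s := Real.sqrt_pos.mpr hv'
    have hZ : Measure.map (fun ω => s⁻¹ * R ω) μ = gaussianReal 0 1 := by
      rw [map_const_mul_gauss hRm hR]
      congr 1
      ext
      push_cast
      rw [inv_pow, Real.sq_sqrt hv'.le]
      field_simp
    have hind : IndepFun X (fun ω => s⁻¹ * R ω) μ := by
      have := hindep.comp measurable_id (measurable_const_mul s⁻¹)
      exact this
    have hpq : p ^ 2 + s ^ 2 = 1 := by rw [hs, Real.sq_sqrt hv'.le]; exact hpv
    have := step3 hXm (by fun_prop) hX hZ hind hpq α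
    have hcong : (fun ω => X ω * indAt α (p * X ω + s * (s⁻¹ * R ω)))
        = fun ω => X ω * indAt α (p * X ω + R ω) := by
      funext ω
      rw [mul_inv_cancel_left₀ hs'.ne']
    rw [hcong] at this
    exact this


lemma integrable_of_std {X : Ω → ℝ} (hXm : Measurable X)
    (hX : Measure.map X μ = gaussianReal 0 1) : Integrable X μ := by
  have h : Integrable (fun x : ℝ => x) (Measure.map X μ) := by rw [hX]; exact integrable_id_gauss
  exact (integrable_map_measure (f := X) (g := fun x : ℝ => x)
    measurable_id'.aestronglyMeasurable hXm.aemeasurable).mp h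

lemma integral_zero_of_std {X : Ω → ℝ} (hXm : Measurable X)
    (hX : Measure.map X μ = gaussianReal 0 1) : ∫ ω, X ω ∂μ = 0 := by
  have h : ∫ ω, X ω ∂μ = ∫ x, x ∂(Measure.map X μ) := by
    rw [integral_map (φ := X) (f := fun x : ℝ => x) hXm.aemeasurable aestronglyMeasurable_id]
  rw [h, hX, integral_id_gauss]


end Stmt15Aux

open Stmt15Aux

/-- Unadjusted difference-in-means bias in the Butterfly-structure with a binary
treatment: `E[Y | T = 1] − E[Y | T = 0] = (cde + abf + ef) η(α)`. -/
theorem stmt15 {Ω : Type*} [MeasurableSpace Ω] (μ : Measure Ω) [IsProbabilityMeasure μ]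
    (U W εM εT εY : Ω → ℝ)
    (hmeas : ∀ i, Measurable (![U, W, εM, εT, εY] i))
    (hgauss : ∀ i, Measure.map (![U, W, εM, εT, εY] i) μ = gaussianReal 0 1)
    (hindep : iIndepFun ![U, W, εM, εT, εY] μ)
    (a b c d e f α : ℝ)
    (hbc : b ^ 2 + c ^ 2 ≤ 1)
    (hae : a ^ 2 + e ^ 2 + 2 * a * b * e ≤ 1)
    (hdf : d ^ 2 + f ^ 2 + 2 * c * d * f ≤ 1)
    (M Tstar Y T : Ω → ℝ)
    (hM : M = fun ω => b * U ω + c * W ω + Real.sqrt (1 - b ^ 2 - c ^ 2) * εM ω)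
    (hTstar : Tstar = fun ω => a * U ω + e * M ω +
      Real.sqrt (1 - a ^ 2 - e ^ 2 - 2 * a * b * e) * εT ω)
    (hY : Y = fun ω => d * W ω + f * M ω +
      Real.sqrt (1 - d ^ 2 - f ^ 2 - 2 * c * d * f) * εY ω)
    (hT : T = fun ω => if α ≤ Tstar ω then (1 : ℝ) else 0) :
    condExpEvent μ Y {ω | T ω = 1} - condExpEvent μ Y {ω | T ω = 0} =
      (c * d * e + a * b * f + e * f) * etaFn α := by
  set ξ : Fin 5 → Ω → ℝ := ![U, W, εM, εT, εY] with hξ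
  set sM : ℝ := Real.sqrt (1 - b ^ 2 - c ^ 2) with hsM
  set sT : ℝ := Real.sqrt (1 - a ^ 2 - e ^ 2 - 2 * a * b * e) with hsT
  set sY : ℝ := Real.sqrt (1 - d ^ 2 - f ^ 2 - 2 * c * d * f) with hsY
  have hsM2 : sM ^ 2 = 1 - b ^ 2 - c ^ 2 := Real.sq_sqrt (by linarith)
  have hsT2 : sT ^ 2 = 1 - a ^ 2 - e ^ 2 - 2 * a * b * e := Real.sq_sqrt (by linarith)
  have hsY2 : sY ^ 2 = 1 - d ^ 2 - f ^ 2 - 2 * c * d * f := Real.sq_sqrt (by linarith)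
  set u : Fin 5 → ℝ := ![a + e * b, e * c, e * sM, sT, 0] with hu
  set v : Fin 5 → ℝ := ![b * f, d + c * f, f * sM, 0, sY] with hv
  set ρ : ℝ := c * d * e + a * b * f + e * f with hρ
  -- rewrite Tstar and Y as linear combinations
  have hS : Tstar = fun ω => ∑ j, u j * ξ j ω := by
    funext ω
    rw [hTstar, hM]
    simp only [hξ, hu, Fin.sum_univ_five, Matrix.cons_val_zero, Matrix.cons_val_one,
      Matrix.head_cons, Matrix.cons_val_two, Matrix.tail_cons, Matrix.cons_val_three,
      Matrix.cons_val_four, Matrix.head_fin_const]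
    ring
  have hYv : Y = fun ω => ∑ j, v j * ξ j ω := by
    funext ω
    rw [hY, hM]
    simp only [hξ, hv, Fin.sum_univ_five, Matrix.cons_val_zero, Matrix.cons_val_one,
      Matrix.head_cons, Matrix.cons_val_two, Matrix.tail_cons, Matrix.cons_val_three,
      Matrix.cons_val_four, Matrix.head_fin_const]
    ring
  have hu2 : ∑ j, (u j) ^ 2 = 1 := by
    simp only [hu, Fin.sum_univ_five, Matrix.cons_val_zero, Matrix.cons_val_one,
      Matrix.head_cons, Matrix.cons_val_two, Matrix.tail_cons, Matrix.cons_val_three,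
      Matrix.cons_val_four, Matrix.head_fin_const]
    linear_combination (e ^ 2) * hsM2 + hsT2
  have huv : ∑ j, v j * u j = ρ := by
    simp only [hu, hv, hρ, Fin.sum_univ_five, Matrix.cons_val_zero, Matrix.cons_val_one,
      Matrix.head_cons, Matrix.cons_val_two, Matrix.tail_cons, Matrix.cons_val_three,
      Matrix.cons_val_four, Matrix.head_fin_const]
    linear_combination (e * f) * hsM2
  have hTm : Measurable Tstar := by
    rw [hS]
    exact Finset.measurable_sum _ (fun j _ => ((hmeas j).const_mul (u j)))
  have hYm : Measurable Y := by
    rw [hYv]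
    exact Finset.measurable_sum _ (fun j _ => ((hmeas j).const_mul (v j)))
  have hTind : T = fun ω => indAt α (Tstar ω) := by
    funext ω
    rw [hT]
    rfl
  -- the law of Tstar
  have hmapS : Measure.map Tstar μ = gaussianReal 0 1 := by
    rw [hS]
    have h := map_combo_gauss (μ := μ) hmeas hgauss hindep u Finset.univ
    rw [h]
    congr 1
    ext
    push_cast
    exact hu2
  -- event sets
  set A : Set Ω := {ω | α ≤ Tstar ω} with hA
  have hAm : MeasurableSet A := measurableSet_le measurable_const hTm
  have hA1 : {ω | T ω = 1} = A := by
    ext ω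
    simp only [Set.mem_setOf_eq, hT, hA]
    by_cases h : α ≤ Tstar ω <;> simp [h]
  have hA0 : {ω | T ω = 0} = Aᶜ := by
    ext ω
    simp only [Set.mem_setOf_eq, hT, hA, Set.mem_compl_iff]
    by_cases h : α ≤ Tstar ω <;> simp [h]
  -- measures of the events
  have hμA : (μ A).toReal = gaussPhi (-α) := by
    have h : μ A = (Measure.map Tstar μ) (Ici α) := by
      rw [Measure.map_apply hTm measurableSet_Ici]
      rfl
    rw [h, hmapS, gauss_Ici_toReal]
  have hμAc : (μ Aᶜ).toReal = gaussPhi α := by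
    have h1 : μ Aᶜ = 1 - μ A := by
      rw [measure_compl hAm (measure_ne_top μ A), measure_univ]
    have h2 : (μ Aᶜ).toReal = 1 - (μ A).toReal := by
      rw [h1, ENNReal.toReal_sub_of_le (by exact prob_le_one) ENNReal.one_ne_top,
        ENNReal.toReal_one]
    rw [h2, hμA]
    linarith [phi_add α]
  -- integrability
  have hintj : ∀ j, Integrable (ξ j) μ := fun j => integrable_of_std (hmeas j) (hgauss j)
  have hTbd : ∀ ω, 0 ≤ T ω ∧ T ω ≤ 1 := by
    intro ω
    simp only [hT]
    constructor <;> split <;> norm_num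
  have hTmeas : Measurable T := by
    rw [hTind]
    exact (measurable_indAt α).comp hTm
  have hintjT : ∀ j, Integrable (fun ω => v j * (ξ j ω * T ω)) μ := by
    intro j
    refine (Integrable.mono' ((hintj j).abs) ?_ ?_).const_mul (v j)
    · exact ((hmeas j).mul hTmeas).aestronglyMeasurable
    · filter_upwards with ω
      rw [Real.norm_eq_abs, abs_mul]
      calc |ξ j ω| * |T ω| ≤ |ξ j ω| * 1 := by
            refine mul_le_mul_of_nonneg_left ?_ (abs_nonneg _)
            rw [abs_of_nonneg (hTbd ω).1]
            exact (hTbd ω).2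
        _ = |ξ j ω| := mul_one _
  have hYint : Integrable Y μ := by
    rw [hYv]
    exact integrable_finset_sum _ (fun j _ => ((hintj j).const_mul (v j)))
  -- the key per-coordinate integrals
  have hkey : ∀ j : Fin 5, ∫ ω, ξ j ω * T ω ∂μ = u j * gaussPdf α := by
    intro j
    set R : Ω → ℝ := fun ω => ∑ k ∈ Finset.univ.erase j, u k * ξ k ω with hR
    have hRm : Measurable R := Finset.measurable_sum _ (fun k _ => ((hmeas k).const_mul (u k)))
    have hsplitS : ∀ ω, Tstar ω = u j * ξ j ω + R ω := by
      intro ω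
      rw [hS, hR]
      simp only
      rw [← Finset.add_sum_erase Finset.univ (fun k => u k * ξ k ω) (Finset.mem_univ j)]
    have hRv : Measure.map R μ
        = gaussianReal 0 (NNReal.mk (∑ k ∈ Finset.univ.erase j, (u k) ^ 2) (by positivity)) :=
      map_combo_gauss hmeas hgauss hindep u _
    have hpv : (u j) ^ 2 + ((NNReal.mk (∑ k ∈ Finset.univ.erase j, (u k) ^ 2) (by positivity)) : ℝ)
        = 1 := by
      push_cast
      rw [← hu2, ← Finset.add_sum_erase Finset.univ (fun k => (u k) ^ 2) (Finset.mem_univ j)]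
    have hind : IndepFun (ξ j) R μ :=
      indep_single_combo hmeas hindep j _ (Finset.notMem_erase j _) u
    have h := key (hmeas j) hRm (hgauss j) hpv hRv hind α
    have hcong : (fun ω => ξ j ω * indAt α (u j * ξ j ω + R ω))
        = fun ω => ξ j ω * T ω := by
      funext ω
      rw [hTind]
      simp only
      rw [← hsplitS ω]
    rwa [hcong] at h
  -- the numerator integral
  have hK : ∫ ω in A, Y ω ∂μ = ρ * gaussPdf α := by
    have h1 : ∫ ω in A, Y ω ∂μ = ∫ ω, Y ω * T ω ∂μ := by
      rw [← integral_indicator hAm]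
      refine integral_congr_ae (Filter.Eventually.of_forall fun ω => ?_)
      simp only [hT, Set.indicator_apply, hA, Set.mem_setOf_eq]
      by_cases h : α ≤ Tstar ω <;> simp [h]
    have h2 : (fun ω => Y ω * T ω) = fun ω => ∑ j, v j * (ξ j ω * T ω) := by
      funext ω
      rw [hYv]
      rw [Finset.sum_mul]
      congr 1
      funext j
      ring
    rw [h1, h2, integral_finset_sum _ (fun j _ => hintjT j)]
    have h3 : ∀ j : Fin 5, ∫ ω, v j * (ξ j ω * T ω) ∂μ = v j * (u j * gaussPdf α) := by
      intro j
      rw [integral_const_mul _ _, hkey j]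
    simp_rw [h3]
    have h4 : ∑ j : Fin 5, v j * (u j * gaussPdf α)
        = (∑ j : Fin 5, v j * u j) * gaussPdf α := by
      rw [Finset.sum_mul]
      exact Finset.sum_congr rfl fun j _ => by ring
    rw [h4, huv]
  -- total integral of Y is zero
  have hY0 : ∫ ω, Y ω ∂μ = 0 := by
    rw [hYv, integral_finset_sum _ (fun j _ => ((hintj j).const_mul (v j)))]
    refine Finset.sum_eq_zero fun j _ => ?_
    rw [integral_const_mul _ _, integral_zero_of_std (hmeas j) (hgauss j), mul_zero]
  have hKc : ∫ ω in Aᶜ, Y ω ∂μ = -(ρ * gaussPdf α) := by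
    have h := integral_add_compl hAm hYint
    rw [hK, hY0] at h
    linarith
  -- final arithmetic
  rw [condExpEvent, condExpEvent, hA1, hA0, hK, hKc, hμA, hμAc]
  have hP1 := phi_pos (-α)
  have hP0 := phi_pos α
  have hsum := phi_add α
  rw [etaFn]
  have h1 : ρ * gaussPdf α / gaussPhi (-α) - -(ρ * gaussPdf α) / gaussPhi α
      = ρ * gaussPdf α * ((gaussPhi α + gaussPhi (-α)) / (gaussPhi (-α) * gaussPhi α)) := by
    field_simp
    ring
  rw [h1, hsum]
  field_simp
  try ring_nf
  try exact Or.inl trivial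
end
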